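/- Finite convex sums in a pointed barycentric algebra are invariant under permutation of indices: for elements a₁,…,aₙ, coefficients r₁,…,rₙ ∈ [0,1] with Σ rᵢ ≤ 1, and any permutation π of {1,…,n}, Σᵢ rᵢ aᵢ = Σᵢ r_{π(i)} a_{π(i)}. -/

import Mathlib

/-- A pointed barycentric algebra: binary operations `a +_r b` for `r ∈ [0,1]`
satisfying the barycentric axioms, together with a distinguished element `⊥`. -/
structure PBA (K : Type*) where
  add : ℝ → K → K → K
  bot : K
  add_one : ∀ a b : K, add 1 a b = a
  add_comm : ∀ r : ℝ, r ∈ Set.Icc (0:ℝ) 1 → ∀ a b : K, add r a b = add (1 - r) b a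
  add_idem : ∀ r : ℝ, r ∈ Set.Icc (0:ℝ) 1 → ∀ a : K, add r a a = a
  add_assoc : ∀ p r : ℝ, p ∈ Set.Ico (0:ℝ) 1 → r ∈ Set.Ico (0:ℝ) 1 → ∀ a b c : K,
    add r (add p a b) c = add (p * r) a (add ((r - p * r) / (1 - p * r)) b c)

open Classical in
/-- The finite convex sum `Σᵢ rᵢ aᵢ` in a pointed barycentric algebra, defined
recursively: the empty sum is `⊥`; `Σ = a₁` if `r₁ = 1`, and
`a₁ +_{r₁} (Σᵢ≥₂ (rᵢ/(1−r₁)) aᵢ)` otherwise. -/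
noncomputable def PBA.csum {K : Type*} (P : PBA K) : List (ℝ × K) → K
  | [] => P.bot
  | (r, a) :: t =>
      if r = 1 then a
      else P.add r a (P.csum (t.map fun p => (p.1 / (1 - r), p.2)))
termination_by l => l.length
decreasing_by simp only [List.length_map, List.length_cons, List.length_attach]; omega

lemma PBA.add_zero' {K} (P : PBA K) (a b : K) : P.add 0 a b = b := by
  rw [P.add_comm 0 (by norm_num), sub_zero, P.add_one]

lemma PBA.csum_cons {K} (P : PBA K) (r : ℝ) (a : K) (t : List (ℝ × K)) (h : r ≠ 1) :
    P.csum ((r,a) :: t) = P.add r a (P.csum (t.map fun p => (p.1 / (1 - r), p.2))) := by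
  rw [PBA.csum, if_neg h]

lemma PBA.csum_one {K} (P : PBA K) (a : K) (t : List (ℝ × K)) :
    P.csum ((1,a) :: t) = a := by
  rw [PBA.csum, if_pos rfl]

lemma PBA.medial {K} (P : PBA K) (r s : ℝ) (hr : r ∈ Set.Icc (0:ℝ) 1)
    (hs : s ∈ Set.Icc (0:ℝ) 1) (hrs : r + s < 1) (a b x : K) :
    P.add r a (P.add (s/(1-r)) b x) = P.add s b (P.add (r/(1-s)) a x) := by
  obtain ⟨hr0, hr1⟩ := hr
  obtain ⟨hs0, hs1⟩ := hs
  rcases eq_or_lt_of_le hr0 with hr0' | hr0'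
  · rcases eq_or_lt_of_le hs0 with hs0' | hs0'
    · simp [← hr0', ← hs0', P.add_zero']
    · simp only [← hr0']
      rw [P.add_zero', zero_div, P.add_zero', sub_zero, div_one]
  · rcases eq_or_lt_of_le hs0 with hs0' | hs0'
    · simp only [← hs0']
      rw [P.add_zero', zero_div, P.add_zero', sub_zero, div_one]
    · -- r, s > 0, r + s < 1
      have hsum0 : (0:ℝ) < r + s := by linarith
      have h1 := P.add_assoc (r/(r+s)) (r+s) ⟨by positivity, by rw [div_lt_one hsum0]; linarith⟩
        ⟨by linarith, hrs⟩ a b x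
      have h2 := P.add_assoc (s/(r+s)) (r+s) ⟨by positivity, by rw [div_lt_one hsum0]; linarith⟩
        ⟨by linarith, hrs⟩ b a x
      have e1 : r/(r+s) * (r+s) = r := div_mul_cancel₀ r hsum0.ne'
      have e2 : s/(r+s) * (r+s) = s := div_mul_cancel₀ s hsum0.ne'
      rw [e1] at h1
      rw [e2] at h2
      have e3 : (r + s - r) / (1 - r) = s / (1 - r) := by ring_nf
      have e4 : (r + s - s) / (1 - s) = r / (1 - s) := by ring_nf
      rw [e3] at h1
      rw [e4] at h2
      rw [← h1, ← h2]
      congr 1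
      rw [P.add_comm (r/(r+s)) ⟨by positivity, by rw [div_le_one hsum0]; linarith⟩]
      congr 1
      field_simp
      ring

lemma PBA.csum_swap {K} (P : PBA K) (r s : ℝ) (a b : K) (t : List (ℝ × K))
    (hr : r ∈ Set.Icc (0:ℝ) 1) (hs : s ∈ Set.Icc (0:ℝ) 1)
    (hsum : r + s + (t.map Prod.fst).sum ≤ 1)
    (hT : 0 ≤ (t.map Prod.fst).sum) :
    P.csum ((r,a)::(s,b)::t) = P.csum ((s,b)::(r,a)::t) := by
  obtain ⟨hr0, hr1⟩ := hr; obtain ⟨hs0, hs1⟩ := hs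
  by_cases hr1' : r = 1
  · have hs0' : s = 0 := by linarith
    subst hr1'; subst hs0'
    rw [P.csum_one, P.csum_cons _ _ _ (by norm_num)]
    simp only [List.map_cons, sub_zero, div_one, Prod.mk.eta, List.map_id]
    rw [P.csum_one, P.add_zero']
  by_cases hs1' : s = 1
  · have hr0' : r = 0 := by linarith
    subst hs1'; subst hr0'
    rw [P.csum_one, P.csum_cons _ _ _ (by norm_num)]
    simp only [List.map_cons, sub_zero, div_one, Prod.mk.eta, List.map_id]
    rw [P.csum_one, P.add_zero']
  have h1r : (0:ℝ) < 1 - r := lt_of_le_of_ne (by linarith) (by intro h; exact hr1' (by linarith))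
  have h1s : (0:ℝ) < 1 - s := lt_of_le_of_ne (by linarith) (by intro h; exact hs1' (by linarith))
  rw [P.csum_cons _ _ _ hr1', P.csum_cons _ _ _ hs1']
  simp only [List.map_cons]
  by_cases hrs : r + s = 1
  · have e1 : s / (1 - r) = 1 := by rw [div_eq_one_iff_eq h1r.ne']; linarith
    have e2 : r / (1 - s) = 1 := by rw [div_eq_one_iff_eq h1s.ne']; linarith
    rw [e1, e2, P.csum_one, P.csum_one]
    rw [P.add_comm r ⟨hr0, hr1⟩]
    congr 1
    linarith
  · have hrs' : r + s < 1 := lt_of_le_of_ne (by linarith) hrs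
    have e1 : s / (1 - r) ≠ 1 := by
      intro h; exact hrs (by have := (div_eq_one_iff_eq h1r.ne').1 h; linarith)
    have e2 : r / (1 - s) ≠ 1 := by
      intro h; exact hrs (by have := (div_eq_one_iff_eq h1s.ne').1 h; linarith)
    rw [P.csum_cons _ _ _ e1, P.csum_cons _ _ _ e2]
    rw [List.map_map, List.map_map]
    have h1rs : (0:ℝ) < 1 - r - s := by linarith
    have emap : ∀ (u : ℝ), 0 < 1 - u → u + (1 - u - (1 - r - s)) < 1 →
        True := fun _ _ _ => trivial
    have e3 : ((fun p : ℝ × K => (p.1 / (1 - s / (1 - r)), p.2)) ∘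
        fun p : ℝ × K => (p.1 / (1 - r), p.2)) =
        fun p : ℝ × K => (p.1 / (1 - r - s), p.2) := by
      funext p
      simp only [Function.comp_apply]
      congr 1
      rw [div_div]
      congr 1
      field_simp
    have e4 : ((fun p : ℝ × K => (p.1 / (1 - r / (1 - s)), p.2)) ∘
        fun p : ℝ × K => (p.1 / (1 - s), p.2)) =
        fun p : ℝ × K => (p.1 / (1 - r - s), p.2) := by
      funext p
      simp only [Function.comp_apply]
      congr 1
      rw [div_div]
      congr 1
      field_simp
      ring
    rw [e3, e4]
    exact P.medial r s ⟨hr0, hr1⟩ ⟨hs0, hs1⟩ hrs' a b _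

lemma PBA.csum_perm_aux {K} (P : PBA K) : ∀ n (l l' : List (ℝ × K)), l.length ≤ n → l.Perm l' →
    (∀ p ∈ l, p.1 ∈ Set.Icc (0:ℝ) 1) → (l.map Prod.fst).sum ≤ 1 → P.csum l = P.csum l' := by
  intro n
  induction n with
  | zero =>
    intro l l' hlen hperm _ _
    have hl : l = [] := List.length_eq_zero_iff.1 (Nat.le_zero.1 hlen)
    subst hl
    rw [hperm.nil_eq]
  | succ n ih =>
    intro l l' hlen hperm
    revert hlen
    induction hperm with
    | nil => intro _ _ _; rfl
    | @cons x l₁ l₂ h ihp =>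
      intro hlen hr hsum
      obtain ⟨r, a⟩ := x
      by_cases h1 : r = 1
      · subst h1; rw [P.csum_one, P.csum_one]
      · have hr1 : r ∈ Set.Icc (0:ℝ) 1 := hr (r, a) List.mem_cons_self
        have h1r : (0:ℝ) < 1 - r := by
          rcases lt_or_eq_of_le hr1.2 with h' | h'
          · linarith
          · exact absurd h' h1
        have htn : ∀ x ∈ l₁.map Prod.fst, (0:ℝ) ≤ x := by
          intro x hx
          obtain ⟨q, hq, rfl⟩ := List.mem_map.1 hx
          exact (hr q (List.mem_cons_of_mem _ hq)).1
        have hsum' : (l₁.map Prod.fst).sum ≤ 1 - r := by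
          simp only [List.map_cons, List.sum_cons] at hsum
          linarith
        rw [P.csum_cons _ _ _ h1, P.csum_cons _ _ _ h1]
        congr 1
        have key : ((l₁.map fun p => (p.1/(1-r), p.2)).map Prod.fst).sum
            = (l₁.map Prod.fst).sum / (1-r) := by
          rw [List.map_map, div_eq_mul_inv]
          simp only [Function.comp_def, div_eq_mul_inv]
          exact List.sum_map_mul_right _ _ _
        apply ih _ _ ?_ (h.map _) ?_ ?_
        · simp only [List.length_map]
          simpa using Nat.succ_le_succ_iff.1 hlen
        · intro p hp
          obtain ⟨q, hq, rfl⟩ := List.mem_map.1 hp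
          refine ⟨div_nonneg (hr q (List.mem_cons_of_mem _ hq)).1 h1r.le, ?_⟩
          rw [div_le_one h1r]
          calc q.1 ≤ (l₁.map Prod.fst).sum :=
                List.single_le_sum htn _ (List.mem_map.2 ⟨q, hq, rfl⟩)
            _ ≤ 1 - r := hsum'
        · rw [key, div_le_one h1r]; exact hsum'
    | @swap x y l₂ =>
      intro hlen hr hsum
      obtain ⟨s, b⟩ := x; obtain ⟨r, a⟩ := y
      have hT : 0 ≤ (l₂.map Prod.fst).sum := by
        apply List.sum_nonneg
        intro x hx
        obtain ⟨q, hq, rfl⟩ := List.mem_map.1 hx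
        exact (hr q (by simp [hq])).1
      apply P.csum_swap r s a b l₂ (hr (r,a) (by simp)) (hr (s,b) (by simp)) ?_ hT
      simp only [List.map_cons, List.sum_cons] at hsum
      linarith
    | trans h1 h2 ih1 ih2 =>
      intro hlen hr hsum
      refine (ih1 hlen hr hsum).trans (ih2 ?_ ?_ ?_)
      · rw [← h1.length_eq]; exact hlen
      · intro p hp; exact hr p (h1.mem_iff.2 hp)
      · rw [← (h1.map Prod.fst).sum_eq]; exact hsum


/-- Finite convex sums in a pointed barycentric algebra are invariant under
permutation of the indices. -/
theorem csum_perm_invariant {K : Type*} (P : PBA K)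
    (l l' : List (ℝ × K)) (hperm : l.Perm l')
    (hr : ∀ p ∈ l, p.1 ∈ Set.Icc (0:ℝ) 1)
    (hsum : (l.map Prod.fst).sum ≤ 1) :
    P.csum l = P.csum l' := by
  exact P.csum_perm_aux l.length l l' le_rfl hperm hr hsum
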